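/- For indices i, j ∈ {1,…,n}, if agent i reaches agent j through B, then λ_{ij} > 0, where λ := (I − B)^{-1}·C. In particular λ_{ii} ≥ π_i > 0 for every i. -/

import Mathlib

/-- Agent `i` reaches agent `j` through `B`: either `i = j`, or there is a path
`k_0 = i, k_1, …, k_m = j` (with `m ≥ 1`) along which all the weights
`B (k_t) (k_{t+1}) = π_{k_t k_{t+1}}` are strictly positive. -/
def Reaches {n : ℕ} (B : Matrix (Fin n) (Fin n) ℝ) (i j : Fin n) : Prop :=
  i = j ∨ ∃ m : ℕ, 1 ≤ m ∧ ∃ k : Fin (m + 1) → Fin n, k 0 = i ∧ k (Fin.last m) = j ∧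
    ∀ t : Fin m, 0 < B (k t.castSucc) (k t.succ)

section Aux

attribute [local instance] Matrix.linftyOpNormedRing Matrix.linftyOpNormedSpace

lemma pow_entry_nonneg {n : ℕ} (B : Matrix (Fin n) (Fin n) ℝ) (hB : ∀ i j, 0 ≤ B i j) :
    ∀ m (i j : Fin n), 0 ≤ (B ^ m) i j := by
  intro m
  induction m with
  | zero =>
    intro i j
    simp only [pow_zero, Matrix.one_apply]
    split <;> norm_num
  | succ m ih =>
    intro i j
    rw [pow_succ, Matrix.mul_apply]
    exact Finset.sum_nonneg fun l _ => mul_nonneg (ih i l) (hB l j)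

lemma pow_entry_pos_of_path {n : ℕ} (B : Matrix (Fin n) (Fin n) ℝ) (hB : ∀ i j, 0 ≤ B i j) :
    ∀ m (k : Fin (m + 1) → Fin n),
      (∀ t : Fin m, 0 < B (k t.castSucc) (k t.succ)) →
      0 < (B ^ m) (k 0) (k (Fin.last m)) := by
  intro m
  induction m with
  | zero =>
    intro k _
    simp [Matrix.one_apply]
  | succ m ih =>
    intro k hk
    rw [pow_succ', Matrix.mul_apply]
    have h1 : 0 < B (k 0) (k 1) := by
      have := hk 0
      simpa using this
    have hrest : 0 < (B ^ m) (k 1) (k (Fin.last (m + 1))) := by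
      have := ih (fun t => k t.succ) (fun t => by
        have := hk t.succ
        have he : (t.succ : Fin (m+1)).castSucc = (t.castSucc : Fin (m+1)).succ := by
          ext; simp
        rwa [he] at this)
      simpa [Fin.succ_last] using this
    refine Finset.sum_pos' (fun l _ => mul_nonneg (hB _ _) (pow_entry_nonneg B hB _ _ _))
      ⟨k 1, Finset.mem_univ _, mul_pos h1 hrest⟩

theorem lambda_pos_of_reaches (n : ℕ) (hn : 0 < n)
    (B : Matrix (Fin n) (Fin n) ℝ) (hB : ∀ i j, 0 ≤ B i j)
    (hrow : ∀ i, ∑ j, B i j < 1) :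
    (∀ i j : Fin n, Reaches B i j →
      0 < ((1 - B)⁻¹ * Matrix.diagonal (fun i => 1 - ∑ j, B i j)) i j) ∧
    ∀ i : Fin n,
      1 - ∑ j, B i j ≤ ((1 - B)⁻¹ * Matrix.diagonal (fun i => 1 - ∑ j, B i j)) i i := by
  have hπ : ∀ i, 0 < 1 - ∑ j, B i j := fun i => by linarith [hrow i]
  -- the norm of B is < 1
  have hnorm : ‖B‖ < 1 := by
    rw [Matrix.linfty_opNorm_def]
    rw [show (1 : ℝ) = ((1 : NNReal) : ℝ) by simp, NNReal.coe_lt_coe]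
    refine (Finset.sup_lt_iff (by norm_num)).2 fun i _ => ?_
    rw [← NNReal.coe_lt_coe]
    push_cast
    calc ∑ j, (‖B i j‖₊ : ℝ) = ∑ j, B i j := by
          refine Finset.sum_congr rfl fun j _ => ?_
          rw [coe_nnnorm, Real.norm_eq_abs, abs_of_nonneg (hB i j)]
      _ < 1 := hrow i
  have hsum : Summable (fun k : ℕ => B ^ k) := summable_geometric_of_norm_lt_one hnorm
  have hinv : (1 - B)⁻¹ = ∑' k : ℕ, B ^ k := by
    rw [Matrix.nonsing_inv_eq_ringInverse, ← geom_series_eq_inverse B hnorm]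
    rfl
  -- entrywise sums
  have hentry : ∀ i j : Fin n,
      HasSum (fun k : ℕ => (B ^ k) i j) ((1 - B)⁻¹ i j) := by
    intro i j
    rw [hinv]
    have hb : ∀ A : Matrix (Fin n) (Fin n) ℝ, ‖A i j‖ ≤ 1 * ‖A‖ := by
      intro A
      rw [one_mul, ← coe_nnnorm, ← coe_nnnorm, NNReal.coe_le_coe]
      calc ‖A i j‖₊ ≤ ∑ j', ‖A i j'‖₊ :=
            Finset.single_le_sum (f := fun j' => ‖A i j'‖₊) (fun _ _ => zero_le) (Finset.mem_univ j)
        _ ≤ Finset.univ.sup fun i' => ∑ j', ‖A i' j'‖₊ := Finset.le_sup (f := fun i' => ∑ j', ‖A i' j'‖₊) (Finset.mem_univ i)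
        _ = ‖A‖₊ := (Matrix.linfty_opNNNorm_def A).symm
    let E : Matrix (Fin n) (Fin n) ℝ →L[ℝ] ℝ :=
      LinearMap.mkContinuous
        { toFun := fun A => A i j
          map_add' := fun _ _ => rfl
          map_smul' := fun _ _ => rfl } 1 hb
    exact hsum.hasSum.mapL E
  have hinv_nonneg : ∀ i j : Fin n, 0 ≤ (1 - B)⁻¹ i j := fun i j =>
    hasSum_le (fun k => pow_entry_nonneg B hB k i j) hasSum_zero (hentry i j) |>.trans_eq rfl
  have hdiag_ge : ∀ i : Fin n, (1 : ℝ) ≤ (1 - B)⁻¹ i i := by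
    intro i
    have h := (hentry i i).tsum_eq
    rw [← h]
    have := Summable.le_tsum (hentry i i).summable 0
      (fun k _ => pow_entry_nonneg B hB k i i)
    simpa [Matrix.one_apply_eq] using this
  constructor
  · intro i j hij
    rw [Matrix.mul_diagonal]
    refine mul_pos ?_ (hπ j)
    rcases hij with rfl | ⟨m, _, k, hk0, hkl, hkpos⟩
    · exact lt_of_lt_of_le one_pos (hdiag_ge i)
    · have hpos : 0 < (B ^ m) i j := by
        have := pow_entry_pos_of_path B hB m k hkpos
        rwa [hk0, hkl] at this
      rw [← (hentry i j).tsum_eq]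
      exact Summable.tsum_pos (hentry i j).summable
        (fun k => pow_entry_nonneg B hB k i j) m hpos
  · intro i
    rw [Matrix.mul_diagonal]
    exact le_mul_of_one_le_left (hπ i).le (hdiag_ge i)

end Aux
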